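/- Every partial sum of the SFTR-1/2 weights is strictly positive: Σ_{m=0}^{n} ω_m > 0 for every integer n ≥ 0. -/
import Mathlib


/-- The SFTR-1/2 weights `ω_m`. -/
noncomputable def sftrW (α : ℝ) : ℕ → ℝ
  | 0 => (2 * α / (α + 1)) ^ α
  | 1 => -α * (2 * α / (α + 1)) ^ (α + 1)
  | (m + 2) =>
      2 * α / (((m : ℝ) + 2) * (α + 1)) *
        (((((m : ℝ) + 2) - 1) / α - α) * sftrW α (m + 1) +
          (α - 1) / (2 * α) * (((m : ℝ) + 2) - 2) * sftrW α m)

lemma sftrW_U (α : ℝ) (hα : α ∈ Set.Ioo (0 : ℝ) 1) :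
    ∀ n : ℕ, (1 + α) * ((n : ℝ) + 1) * sftrW α (n + 1)
      + 2 * α ^ 2 * (∑ m ∈ Finset.range (n + 1), sftrW α m)
      = (1 - α) * (n : ℝ) * sftrW α n := by
  obtain ⟨h0, h1⟩ := hα
  have hα1 : α + 1 ≠ 0 := by linarith
  have hc : (0 : ℝ) < 2 * α / (α + 1) := by positivity
  intro n
  induction n with
  | zero =>
      have hpow : (2 * α / (α + 1)) ^ (α + 1) = (2 * α / (α + 1)) ^ α * (2 * α / (α + 1)) := by
        rw [Real.rpow_add_one (ne_of_gt hc)]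
      simp only [Nat.cast_zero, Finset.sum_range_one, zero_add,
        show sftrW α 1 = -α * (2 * α / (α + 1)) ^ (α + 1) from rfl,
        show sftrW α 0 = (2 * α / (α + 1)) ^ α from rfl, hpow]
      field_simp
      ring
  | succ n ih =>
      have hrec : ((n : ℝ) + 2) * (α + 1) * sftrW α (n + 2)
          = (2 * ((n : ℝ) + 1) - 2 * α ^ 2) * sftrW α (n + 1)
            + (α - 1) * (n : ℝ) * sftrW α n := by
        rw [show sftrW α (n + 2) = 2 * α / (((n : ℝ) + 2) * (α + 1)) *
            (((((n : ℝ) + 2) - 1) / α - α) * sftrW α (n + 1) +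
              (α - 1) / (2 * α) * (((n : ℝ) + 2) - 2) * sftrW α n) from rfl]
        have hn2 : ((n : ℝ) + 2) ≠ 0 := by positivity
        field_simp
        ring
      rw [Finset.sum_range_succ]
      push_cast
      push_cast at ih
      linear_combination ih + hrec
  
theorem sftrW_partial_sum_pos (α : ℝ) (hα : α ∈ Set.Ioo (0 : ℝ) 1) :
    ∀ n : ℕ, 0 < ∑ m ∈ Finset.range (n + 1), sftrW α m := by
  obtain ⟨h0, h1⟩ := hα
  set S : ℕ → ℝ := fun n => ∑ m ∈ Finset.range (n + 1), sftrW α m with hS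
  have key : ∀ n : ℕ, 0 < S n ∧ (1 - α) * S n ≤ (1 + α) * S (n + 1) := by
    intro n
    induction n with
    | zero =>
        have hS0 : S 0 = (2 * α / (α + 1)) ^ α := by
          simp [hS, Finset.sum_range_one, sftrW]
        have hS0pos : 0 < S 0 := by rw [hS0]; positivity
        refine ⟨hS0pos, ?_⟩
        have hU := sftrW_U α ⟨h0, h1⟩ 0
        have hS1 : S 1 = S 0 + sftrW α 1 := by
          simp [hS, Finset.sum_range_succ]
        norm_num at hU
        show (1 - α) * S 0 ≤ (1 + α) * S 1
        have hw0 : S 0 = sftrW α 0 := by simp [hS]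
        rw [← hw0] at hU
        nlinarith [hU, hS1, mul_pos (mul_pos h0 (by linarith : (0:ℝ) < 1 - α)) hS0pos]
    | succ n ih =>
        obtain ⟨hSn, hstep⟩ := ih
        have hSn1 : 0 < S (n + 1) := by nlinarith
        refine ⟨hSn1, ?_⟩
        have hU := sftrW_U α ⟨h0, h1⟩ (n + 1)
        have hsum1 : (∑ m ∈ Finset.range (n + 1 + 1), sftrW α m) = S (n + 1) := rfl
        rw [hsum1] at hU
        have hω1 : sftrW α (n + 1) = S (n + 1) - S n := by
          simp [hS, Finset.sum_range_succ]
        have hω2 : sftrW α (n + 2) = S (n + 2) - S (n + 1) := by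
          simp [hS, Finset.sum_range_succ]
        rw [hω1, hω2] at hU
        push_cast at hU
        have hn : (0 : ℝ) ≤ (n : ℝ) + 1 := by positivity
        nlinarith [hU, mul_le_mul_of_nonneg_left hstep hn, mul_pos (mul_pos h0 (by linarith : (0:ℝ) < 1 - α)) hSn1]
  intro n
  exact (key n).1
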